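/- For a repeated string S in T, the number of net occurrences of S (occurrences (i,j) with f(T[i-1..j]) = 1 and f(T[i..j+1]) = 1, boundary conventions applying) is well-defined via extensions: distinct net occurrences of S have distinct pairs of (left character, right character) extensions, so the map from net occurrences to pairs (x,y) with f(xS)=f(Sy)=f(xSy)=1 is a bijection. -/

import Mathlib

set_option linter.unusedSectionVars false
set_option linter.unusedVariables false
set_option linter.unnecessarySeqFocus false
set_option maxHeartbeats 1000000


variable {α : Type*} [DecidableEq α]

/-- Number of occurrences of `S` as a substring of `T`. -/
def occ (T S : List α) : ℕ :=
  ((Finset.range T.length).filter (fun i => S <+: T.drop i)).card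

/-- Net occurrence (with boundary conventions at the ends of the text). -/
def IsNetOcc (T S : List α) (i : ℕ) : Prop :=
  S <+: T.drop i ∧ i + S.length ≤ T.length ∧ 2 ≤ occ T S ∧
    (i = 0 ∨ occ T ((T.drop (i - 1)).take (S.length + 1)) = 1) ∧
    (i + S.length = T.length ∨ occ T ((T.drop i).take (S.length + 1)) = 1)


lemma len_le_of_pre {T S : List α} {i : ℕ} (hS : S ≠ []) (h : S <+: T.drop i) :
    i + S.length ≤ T.length := by
  have hl := h.length_le
  simp only [List.length_drop] at hl
  have hi : i < T.length := by
    by_contra hi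
    push_neg at hi
    have : S.length = 0 := by omega
    exact hS (List.length_eq_zero_iff.mp this)
  omega

lemma mem_occ_filter {T S : List α} {i : ℕ} (hS : S ≠ []) :
    i ∈ (Finset.range T.length).filter (fun i => S <+: T.drop i) ↔ S <+: T.drop i := by
  simp only [Finset.mem_filter, Finset.mem_range]
  constructor
  · exact fun h => h.2
  · intro h
    refine ⟨?_, h⟩
    have := len_le_of_pre hS h
    have : 0 < S.length := List.length_pos_iff.mpr hS
    omega

lemma occ_pos {T S : List α} {i : ℕ} (hS : S ≠ []) (h : S <+: T.drop i) : 1 ≤ occ T S :=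
  Finset.card_pos.mpr ⟨i, (mem_occ_filter hS).mpr h⟩

lemma occ_unique {T S : List α} {i j : ℕ} (hS : S ≠ []) (ho : occ T S = 1)
    (hi : S <+: T.drop i) (hj : S <+: T.drop j) : i = j := by
  obtain ⟨a, ha⟩ := Finset.card_eq_one.mp ho
  have h1 := (mem_occ_filter hS).mpr hi
  have h2 := (mem_occ_filter hS).mpr hj
  rw [ha, Finset.mem_singleton] at h1 h2
  omega

lemma occ_mono {T A B : List α} (h : A <+: B) : occ T B ≤ occ T A := by
  apply Finset.card_le_card
  intro i hi
  simp only [Finset.mem_filter, Finset.mem_range] at hi ⊢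
  exact ⟨hi.1, h.trans hi.2⟩

lemma getElem_of_pre {T S : List α} {i k : ℕ} (h : S <+: T.drop i)
    (hk : k < S.length) (hik : i + k < T.length) : T[i + k] = S[k] := by
  obtain ⟨t, ht⟩ := h
  have hkd : k < (T.drop i).length := by rw [← ht]; simp; omega
  have h1 : (T.drop i)[k]'hkd = T[i + k] := List.getElem_drop
  rw [← h1]
  have : (T.drop i)[k]'hkd = (S ++ t)[k]'(by simp; omega) := by
    congr 1 <;> rw [ht]
  rw [this, List.getElem_append_left hk]

lemma pre_tail {T L : List α} {a : α} {j : ℕ} (h : (a :: L) <+: T.drop j) :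
    L <+: T.drop (j + 1) := by
  obtain ⟨t, ht⟩ := h
  have : T.drop (j + 1) = L ++ t := by
    rw [← List.drop_drop, ← ht]; simp
  exact ⟨t, this.symm⟩

lemma take_of_pre {T P : List α} {i : ℕ} (h : P <+: T.drop i) :
    (T.drop i).take P.length = P := (List.prefix_iff_eq_take.mp h).symm

lemma getElem_idx_eq {l : List α} {i j : ℕ} (h : i = j) (hi : i < l.length) :
    l[i] = l[j]'(h ▸ hi) := by subst h; rfl

lemma sent_zero {T₀ : List α} {s₀ s₁ : α} (h₀ : s₀ ∉ T₀) (hss : s₀ ≠ s₁)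
    {k : ℕ} (hk : k < (s₀ :: (T₀ ++ [s₁])).length)
    (h : (s₀ :: (T₀ ++ [s₁]))[k] = s₀) : k = 0 := by
  cases k with
  | zero => rfl
  | succ m =>
    exfalso
    simp only [List.getElem_cons_succ] at h
    simp only [List.length_cons, List.length_append, List.length_singleton,
      List.length_nil] at hk
    rcases lt_or_ge m T₀.length with hm | hm
    · refine h₀ ?_
      rw [← h, List.getElem_append_left hm]
      exact List.getElem_mem hm
    · have hm' : m = T₀.length := by omega
      subst hm'
      rw [List.getElem_append_right (le_refl _)] at h
      simp at h
      exact hss h.symm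

lemma sent_last {T₀ : List α} {s₀ s₁ : α} (h₁ : s₁ ∉ T₀) (hss : s₀ ≠ s₁)
    {k : ℕ} (hk : k < (s₀ :: (T₀ ++ [s₁])).length)
    (h : (s₀ :: (T₀ ++ [s₁]))[k] = s₁) : k = T₀.length + 1 := by
  cases k with
  | zero =>
    simp only [List.getElem_cons_zero] at h
    exact absurd h hss
  | succ m =>
    simp only [List.getElem_cons_succ] at h
    simp only [List.length_cons, List.length_append, List.length_singleton,
      List.length_nil] at hk
    rcases lt_or_ge m T₀.length with hm | hm
    · refine absurd ?_ h₁
      rw [← h, List.getElem_append_left hm]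
      exact List.getElem_mem hm
    · omega

lemma sent_last' {T₀ : List α} (s₀ s₁ : α) :
    (s₀ :: (T₀ ++ [s₁]))[T₀.length + 1]'(by simp) = s₁ := by
  simp only [List.getElem_cons_succ]
  rw [List.getElem_append_right (le_refl _)]
  simp

lemma main_aux (T : List α) (s₀ s₁ : α)
    (hs0 : ∀ k (hk : k < T.length), T[k] = s₀ → k = 0)
    (hs1 : ∀ k (hk : k < T.length), T[k] = s₁ → k + 1 = T.length)
    (hfirst : ∀ (h : 0 < T.length), T[0] = s₀)
    (hlast : ∀ (h : T.length - 1 < T.length), T[T.length - 1] = s₁)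
    (S : List α) (hS : S ≠ []) (hrep : 2 ≤ occ T S) :
    Set.BijOn (fun i => (T.getD (i - 1) s₀, T.getD (i + S.length) s₁))
      {i | IsNetOcc T S i}
      {p : α × α | occ T (p.1 :: S) = 1 ∧ occ T (S ++ [p.2]) = 1 ∧
        occ T (p.1 :: (S ++ [p.2])) = 1} := by
  have hSpos : 0 < S.length := List.length_pos_iff.mpr hS
  have key : ∀ i, IsNetOcc T S i → 1 ≤ i ∧ i + S.length + 1 ≤ T.length ∧
      (T.getD (i - 1) s₀ :: S) <+: T.drop (i - 1) ∧
      occ T (T.getD (i - 1) s₀ :: S) = 1 ∧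
      occ T (S ++ [T.getD (i + S.length) s₁]) = 1 ∧
      occ T (T.getD (i - 1) s₀ :: (S ++ [T.getD (i + S.length) s₁])) = 1 := by
    intro i hi
    obtain ⟨hpre, hlen, -, hL, hR⟩ := hi
    -- a second occurrence
    have h2 : ∃ i', S <+: T.drop i' ∧ i' ≠ i := by
      by_contra hcon
      push_neg at hcon
      have hsub : (Finset.range T.length).filter (fun j => S <+: T.drop j) ⊆ {i} := by
        intro j hj
        rw [mem_occ_filter hS] at hj
        simp [hcon j hj]
      have := Finset.card_le_card hsub
      simp only [Finset.card_singleton] at this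
      have : occ T S ≤ 1 := this
      omega
    obtain ⟨i', hpre', hii'⟩ := h2
    have hlen' : i' + S.length ≤ T.length := len_le_of_pre hS hpre'
    have h1i : 1 ≤ i := by
      rcases Nat.eq_zero_or_pos i with h0 | h
      · exfalso
        subst h0
        have e1 : T[0 + 0]'(by omega) = S[0]'hSpos :=
          getElem_of_pre hpre hSpos (by omega)
        have e2 : T[i' + 0]'(by omega) = S[0]'hSpos :=
          getElem_of_pre hpre' hSpos (by omega)
        have hf : T[0]'(by omega) = s₀ := hfirst (by omega)
        have e1' : S[0]'hSpos = s₀ := by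
          rw [← e1, getElem_idx_eq (show 0 + 0 = 0 by omega)]
          exact hf
        have : i' + 0 = 0 := hs0 _ _ (by rw [e2, e1'])
        omega
      · exact h
    have hup : i + S.length + 1 ≤ T.length := by
      rcases Nat.lt_or_ge (i + S.length) T.length with h | h
      · omega
      exfalso
      have heq : i + S.length = T.length := le_antisymm hlen h
      have e1 : T[i + (S.length - 1)]'(by omega) = S[S.length - 1]'(by omega) :=
        getElem_of_pre hpre (by omega) (by omega)
      have e2 : T[i' + (S.length - 1)]'(by omega) = S[S.length - 1]'(by omega) :=
        getElem_of_pre hpre' (by omega) (by omega)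
      have hl : T[T.length - 1]'(by omega) = s₁ := hlast (by omega)
      have e1' : S[S.length - 1]'(by omega) = s₁ := by
        rw [← e1, getElem_idx_eq (show i + (S.length - 1) = T.length - 1 by omega)]
        exact hl
      have := hs1 (i' + (S.length - 1)) (by omega) (by rw [e2, e1'])
      omega
    -- structure facts
    have hgetx : T.getD (i - 1) s₀ = T[i - 1]'(by omega) :=
      List.getD_eq_getElem T s₀ (by omega)
    have hdropx : T.drop (i - 1) = T[i - 1]'(by omega) :: T.drop i := by
      have h := List.drop_eq_getElem_cons (i := i - 1) (l := T) (by omega)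
      rwa [Nat.sub_add_cancel h1i] at h
    have hxS : (T.getD (i - 1) s₀ :: S) <+: T.drop (i - 1) := by
      rw [hdropx, hgetx]
      exact List.cons_prefix_cons.mpr ⟨rfl, hpre⟩
    have hgety : T.getD (i + S.length) s₁ = T[i + S.length]'(by omega) :=
      List.getD_eq_getElem T s₁ (by omega)
    have hdropy : T.drop (i + S.length) =
        T[i + S.length]'(by omega) :: T.drop (i + S.length + 1) :=
      List.drop_eq_getElem_cons (by omega)
    have hsplit : T.drop i = S ++ T.drop (i + S.length) := by
      conv_lhs => rw [← List.take_append_drop S.length (T.drop i)]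
      rw [take_of_pre hpre, List.drop_drop]
    have hSy : (S ++ [T.getD (i + S.length) s₁]) <+: T.drop i := by
      rw [hsplit, hdropy, hgety]
      exact ⟨T.drop (i + S.length + 1), by simp⟩
    have htakeL : (T.drop (i - 1)).take (S.length + 1) = T.getD (i - 1) s₀ :: S := by
      have h := take_of_pre hxS
      simpa using h
    have htakeR : (T.drop i).take (S.length + 1) = S ++ [T.getD (i + S.length) s₁] := by
      have h := take_of_pre hSy
      simpa using h
    have occL : occ T (T.getD (i - 1) s₀ :: S) = 1 := by
      rcases hL with h0 | hL
      · omega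
      · rwa [htakeL] at hL
    have occR : occ T (S ++ [T.getD (i + S.length) s₁]) = 1 := by
      rcases hR with h0 | hR
      · omega
      · rwa [htakeR] at hR
    have hxSy : (T.getD (i - 1) s₀ :: (S ++ [T.getD (i + S.length) s₁])) <+:
        T.drop (i - 1) := by
      rw [hdropx, hgetx]
      exact List.cons_prefix_cons.mpr ⟨rfl, hSy⟩
    have occB : occ T (T.getD (i - 1) s₀ :: (S ++ [T.getD (i + S.length) s₁])) = 1 := by
      have hle := occ_mono (T := T)
        (List.cons_prefix_cons.mpr ⟨rfl, List.prefix_append S [T.getD (i + S.length) s₁]⟩ :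
          (T.getD (i - 1) s₀ :: S) <+: _)
      have hge := occ_pos (List.cons_ne_nil _ _) hxSy
      omega
    exact ⟨h1i, hup, hxS, occL, occR, occB⟩
  refine ⟨?_, ?_, ?_⟩
  · intro i hi
    obtain ⟨-, -, -, occL, occR, occB⟩ := key i hi
    exact ⟨occL, occR, occB⟩
  · intro i hi j hj heq
    obtain ⟨h1i, -, hxSi, occLi, -, -⟩ := key i hi
    obtain ⟨h1j, -, hxSj, -, -, -⟩ := key j hj
    have hx : T.getD (i - 1) s₀ = T.getD (j - 1) s₀ := congrArg Prod.fst heq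
    rw [← hx] at hxSj
    have := occ_unique (List.cons_ne_nil _ _) occLi hxSi hxSj
    omega
  · intro p hp
    obtain ⟨h1, h2, h3⟩ := hp
    have hpos : 0 < ((Finset.range T.length).filter
        (fun i => (p.1 :: (S ++ [p.2])) <+: T.drop i)).card := by
      have : occ T (p.1 :: (S ++ [p.2])) = 1 := h3
      rw [occ] at this
      omega
    obtain ⟨j, hjmem⟩ := Finset.card_pos.mp hpos
    have hfull : (p.1 :: (S ++ [p.2])) <+: T.drop j :=
      ((mem_occ_filter (List.cons_ne_nil _ _)).mp hjmem)
    have hlenf : j + S.length + 2 ≤ T.length := by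
      have h := len_le_of_pre (List.cons_ne_nil _ _) hfull
      simp only [List.length_cons, List.length_append, List.length_singleton,
        List.length_nil] at h
      omega
    have hSy : (S ++ [p.2]) <+: T.drop (j + 1) := pre_tail hfull
    have hpreS : S <+: T.drop (j + 1) := (List.prefix_append S [p.2]).trans hSy
    have hxS : (p.1 :: S) <+: T.drop j :=
      (List.cons_prefix_cons.mpr ⟨rfl, List.prefix_append S [p.2]⟩).trans hfull
    refine ⟨j + 1, ⟨hpreS, by omega, hrep, Or.inr ?_, Or.inr ?_⟩, ?_⟩
    · simp only [Nat.add_sub_cancel]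
      rw [show (T.drop j).take (S.length + 1) = p.1 :: S from by
        simpa using take_of_pre hxS]
      exact h1
    · rw [show (T.drop (j + 1)).take (S.length + 1) = S ++ [p.2] from by
        simpa using take_of_pre hSy]
      exact h2
    · have e1 : T.getD (j + 1 - 1) s₀ = p.1 := by
        simp only [Nat.add_sub_cancel]
        rw [List.getD_eq_getElem T s₀ (show j < T.length by omega)]
        have h := getElem_of_pre hfull
          (show 0 < (p.1 :: (S ++ [p.2])).length by simp) (show j + 0 < T.length by omega)
        rw [getElem_idx_eq (show j = j + 0 by omega), h]
        rfl
      have e2 : T.getD (j + 1 + S.length) s₁ = p.2 := by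
        rw [List.getD_eq_getElem T s₁ (show j + 1 + S.length < T.length by omega)]
        have h := getElem_of_pre hfull
          (show S.length + 1 < (p.1 :: (S ++ [p.2])).length by simp)
          (show j + (S.length + 1) < T.length by omega)
        rw [getElem_idx_eq (show j + 1 + S.length = j + (S.length + 1) by omega), h]
        simp
      exact Prod.ext e1 e2

/-- With sentinels prepended and appended to the text, the map sending a net occurrence `i`
of a repeated string `S` to the pair of its left and right extension characters
`(T[i-1], T[i+|S|])` is a bijection from the set of net occurrences of `S` onto the set of
pairs `(x, y)` with `f(xS) = f(Sy) = f(xSy) = 1`. -/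
theorem netOcc_bijOn_pairs (T₀ : List α) (s₀ s₁ : α)
    (h₀ : s₀ ∉ T₀) (h₁ : s₁ ∉ T₀) (hss : s₀ ≠ s₁)
    (T : List α) (hT : T = s₀ :: (T₀ ++ [s₁]))
    (S : List α) (hS : S ≠ []) (hrep : 2 ≤ occ T S) :
    Set.BijOn (fun i => (T.getD (i - 1) s₀, T.getD (i + S.length) s₁))
      {i | IsNetOcc T S i}
      {p : α × α | occ T (p.1 :: S) = 1 ∧ occ T (S ++ [p.2]) = 1 ∧
        occ T (p.1 :: (S ++ [p.2])) = 1} := by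
  subst hT
  refine main_aux _ s₀ s₁ ?_ ?_ ?_ ?_ S hS hrep
  · exact fun k hk h => sent_zero h₀ hss hk h
  · intro k hk h
    have := sent_last h₁ hss hk h
    simp only [List.length_cons, List.length_append, List.length_singleton,
      List.length_nil]
    omega
  · intro h
    rfl
  · intro h
    have hl : (s₀ :: (T₀ ++ [s₁])).length - 1 = T₀.length + 1 := by simp
    rw [getElem_idx_eq hl]
    exact sent_last' s₀ s₁
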